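/- Let B ∈ ℝ^{n×n} be symmetric positive-definite with symmetric square root U, R ∈ ℝ^{m×m} symmetric positive-definite with symmetric square root V, H ∈ ℝ^{m×n}, m < n, and S = I_n + U Hᵀ R^{−1} H U. Then κ(S) ≤ 1 + ‖V^{−1} H B Hᵀ V^{−1}‖_∞, where ‖·‖_∞ is the maximum-absolute-row-sum norm. -/

import Mathlib

open Matrix

/-- The maximum-absolute-row-sum (infinity) norm of a matrix. -/
noncomputable def infNorm {k : Type*} [Fintype k] (A : Matrix k k ℝ) : ℝ :=
  ⨆ i : k, ∑ j : k, |A i j|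

/-- The spectral condition number `κ(A) = λ_max(A)/λ_min(A)` (via the real spectrum). -/
noncomputable def condNum {k : Type*} [Fintype k] [DecidableEq k]
    (A : Matrix k k ℝ) : ℝ :=
  sSup (spectrum ℝ A) / sInf (spectrum ℝ A)

lemma infNorm_nonneg {k : Type*} [Fintype k] (A : Matrix k k ℝ) : 0 ≤ infNorm A :=
  Real.iSup_nonneg fun _ => Finset.sum_nonneg fun _ _ => abs_nonneg _

lemma row_sum_le_infNorm {k : Type*} [Fintype k] (A : Matrix k k ℝ) (i : k) :
    ∑ j : k, |A i j| ≤ infNorm A :=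
  le_ciSup (f := fun i : k => ∑ j : k, |A i j|) (Set.finite_range _).bddAbove i

lemma dp_self_nonneg {k : Type*} [Fintype k] (v : k → ℝ) : 0 ≤ v ⬝ᵥ v :=
  Finset.sum_nonneg fun i _ => mul_self_nonneg (v i)

/-- Rayleigh quotient bound via max row sum norm for a symmetric matrix. -/
lemma quad_le_infNorm {k : Type*} [Fintype k] (W : Matrix k k ℝ) (hW : W.IsSymm)
    (w : k → ℝ) : w ⬝ᵥ W.mulVec w ≤ infNorm W * (w ⬝ᵥ w) := by
  have habs : ∀ i j, |W j i| = |W i j| := by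
    intro i j
    have : W j i = W i j := by
      conv_lhs => rw [← hW]
      rfl
    rw [this]
  have h1 : w ⬝ᵥ W.mulVec w = ∑ i, ∑ j, w i * (W i j * w j) := by
    simp [dotProduct, mulVec, Finset.mul_sum]
  have h2 : ∀ i j, w i * (W i j * w j) ≤ |W i j| * ((w i)^2 + (w j)^2) / 2 := by
    intro i j
    have hle : w i * (W i j * w j) ≤ |w i| * |W i j| * |w j| := by
      calc w i * (W i j * w j) ≤ |w i * (W i j * w j)| := le_abs_self _
        _ = |w i| * |W i j| * |w j| := by rw [abs_mul, abs_mul]; ring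
    nlinarith [sq_nonneg (|w i| - |w j|), abs_nonneg (W i j), sq_abs (w i), sq_abs (w j),
      abs_nonneg (w i), abs_nonneg (w j)]
  have h3 : w ⬝ᵥ W.mulVec w ≤ ∑ i, ∑ j, |W i j| * ((w i)^2 + (w j)^2) / 2 := by
    rw [h1]
    exact Finset.sum_le_sum fun i _ => Finset.sum_le_sum fun j _ => h2 i j
  have h4 : ∑ i, ∑ j, |W i j| * ((w i)^2 + (w j)^2) / 2
      = ∑ i, (w i)^2 * ∑ j, |W i j| := by
    have e0 : ∀ i j : k, |W i j| * ((w i)^2 + (w j)^2) / 2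
        = (w i)^2 * |W i j| / 2 + (w j)^2 * |W i j| / 2 := fun i j => by ring
    simp_rw [e0, Finset.sum_add_distrib]
    have e2 : ∑ i, ∑ j, (w j)^2 * |W i j| / 2 = ∑ i, ∑ j, (w i)^2 * |W i j| / 2 := by
      rw [Finset.sum_comm]
      exact Finset.sum_congr rfl fun i _ =>
        Finset.sum_congr rfl fun j _ => by rw [habs i j]
    rw [e2, ← Finset.sum_add_distrib]
    refine Finset.sum_congr rfl fun i _ => ?_
    rw [Finset.mul_sum, ← Finset.sum_add_distrib]
    exact Finset.sum_congr rfl fun j _ => by ring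
  have h5 : ∑ i, (w i)^2 * ∑ j, |W i j| ≤ ∑ i, (w i)^2 * infNorm W :=
    Finset.sum_le_sum fun i _ =>
      mul_le_mul_of_nonneg_left (row_sum_le_infNorm W i) (sq_nonneg _)
  have h6 : ∑ i, (w i)^2 * infNorm W = infNorm W * (w ⬝ᵥ w) := by
    rw [dotProduct, Finset.mul_sum]
    exact Finset.sum_congr rfl fun i _ => by ring
  linarith [h3, h4 ▸ h3, h5]

/-- A real spectrum element of a matrix has an eigenvector. -/
lemma exists_eigenvector {k : ℕ} (S : Matrix (Fin k) (Fin k) ℝ) {μ : ℝ}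
    (hμ : μ ∈ spectrum ℝ S) : ∃ v : Fin k → ℝ, v ≠ 0 ∧ S.mulVec v = μ • v := by
  rw [spectrum.mem_iff, Matrix.isUnit_iff_isUnit_det, isUnit_iff_ne_zero, not_not] at hμ
  obtain ⟨v, hv, hv0⟩ := (Matrix.exists_mulVec_eq_zero_iff).2 hμ
  refine ⟨v, hv, ?_⟩
  have h := hv0
  rw [Matrix.sub_mulVec] at h
  have hsm : (algebraMap ℝ (Matrix (Fin k) (Fin k) ℝ) μ) *ᵥ v = μ • v := by
    rw [Algebra.algebraMap_eq_smul_one, Matrix.smul_mulVec, Matrix.one_mulVec]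
  rw [hsm, sub_eq_zero] at h
  exact h.symm

theorem stmt19 (n m : ℕ) (hmn : m < n)
    (B U : Matrix (Fin n) (Fin n) ℝ) (R V : Matrix (Fin m) (Fin m) ℝ)
    (hBpd : B.PosDef) (hRpd : R.PosDef)
    (hUsymm : U.IsSymm) (hUU : U * U = B)
    (hVsymm : V.IsSymm) (hVV : V * V = R)
    (H : Matrix (Fin m) (Fin n) ℝ)
    (S : Matrix (Fin n) (Fin n) ℝ)
    (hS : S = 1 + U * H.transpose * R⁻¹ * H * U) :
    condNum S ≤ 1 + infNorm (V⁻¹ * H * B * H.transpose * V⁻¹) := by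
  set A : Matrix (Fin m) (Fin n) ℝ := V⁻¹ * H * U with hA
  have hVi : (V⁻¹)ᵀ = V⁻¹ := by rw [Matrix.transpose_nonsing_inv, hVsymm]
  have hAT : Aᵀ = U * Hᵀ * V⁻¹ := by
    rw [hA, Matrix.transpose_mul, Matrix.transpose_mul, hUsymm, hVi, Matrix.mul_assoc]
  have hW : V⁻¹ * H * B * Hᵀ * V⁻¹ = A * Aᵀ := by
    rw [hAT, hA, ← hUU]
    simp only [Matrix.mul_assoc]
  have hSM : S = 1 + Aᵀ * A := by
    rw [hS, hAT, hA, ← hVV, Matrix.mul_inv_rev]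
    simp only [Matrix.mul_assoc]
  set c : ℝ := infNorm (V⁻¹ * H * B * Hᵀ * V⁻¹) with hc
  have hc0 : 0 ≤ c := infNorm_nonneg _
  have hWsymm : (V⁻¹ * H * B * Hᵀ * V⁻¹).IsSymm := by
    rw [hW]
    unfold Matrix.IsSymm
    rw [Matrix.transpose_mul, Matrix.transpose_transpose]
  -- key spectral bounds
  have key : ∀ μ ∈ spectrum ℝ S, 1 ≤ μ ∧ μ ≤ 1 + c := by
    intro μ hμ
    obtain ⟨v, hv, hev⟩ := exists_eigenvector S hμ
    set p : ℝ := v ⬝ᵥ v with hp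
    have hp0 : 0 < p := by
      rcases lt_or_eq_of_le (dp_self_nonneg v) with h | h
      · exact h
      · exact absurd (dotProduct_self_eq_zero.mp h.symm) hv
    set q : ℝ := (A *ᵥ v) ⬝ᵥ (A *ᵥ v) with hq
    have hq0 : 0 ≤ q := dp_self_nonneg _
    have hkey : μ * p = p + q := by
      have h1 : v ⬝ᵥ S *ᵥ v = μ * p := by
        rw [hev, dotProduct_smul, hp]; ring_nf
      have h2 : v ⬝ᵥ S *ᵥ v = p + q := by
        rw [hSM, Matrix.add_mulVec, Matrix.one_mulVec, dotProduct_add]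
        congr 1
        rw [← Matrix.mulVec_mulVec, Matrix.dotProduct_mulVec, Matrix.vecMul_transpose]
      rw [← h1, h2]
    constructor
    · nlinarith
    · rcases eq_or_lt_of_le hq0 with hq00 | hqpos
      · nlinarith
      · set w : Fin m → ℝ := A *ᵥ v with hwdef
        set r : ℝ := (Aᵀ *ᵥ w) ⬝ᵥ (Aᵀ *ᵥ w) with hr
        have hCS : q ^ 2 ≤ p * r := by
          have hqform : q = v ⬝ᵥ (Aᵀ *ᵥ w) := by
            rw [Matrix.dotProduct_mulVec, Matrix.vecMul_transpose]
          have := Finset.sum_mul_sq_le_sq_mul_sq Finset.univ v (Aᵀ *ᵥ w)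
          have ep : p = ∑ i, v i ^ 2 := by
            rw [hp, dotProduct]; exact Finset.sum_congr rfl fun i _ => (sq (v i)).symm
          have er : r = ∑ i, (Aᵀ *ᵥ w) i ^ 2 := by
            rw [hr, dotProduct]; exact Finset.sum_congr rfl fun i _ => (sq _).symm
          rw [hqform, dotProduct, ep, er]
          exact this
        have hrc : r ≤ c * q := by
          have hform : w ⬝ᵥ (V⁻¹ * H * B * Hᵀ * V⁻¹) *ᵥ w = r := by
            rw [hW, ← Matrix.mulVec_mulVec, Matrix.dotProduct_mulVec,
              ← Matrix.mulVec_transpose, hr]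
          calc r = w ⬝ᵥ (V⁻¹ * H * B * Hᵀ * V⁻¹) *ᵥ w := hform.symm
            _ ≤ infNorm (V⁻¹ * H * B * Hᵀ * V⁻¹) * (w ⬝ᵥ w) :=
                quad_le_infNorm _ hWsymm w
            _ = c * q := by rw [← hc, ← hq]
        have hqcp : q ≤ c * p := by nlinarith
        nlinarith
  -- assemble
  have hnFin : Nonempty (Fin n) := ⟨⟨0, Nat.lt_of_le_of_lt (Nat.zero_le m) hmn⟩⟩
  have hSH : S.IsHermitian := by
    have : Sᴴ = Sᵀ := by
      ext i j; simp [Matrix.conjTranspose_apply, Matrix.transpose_apply]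
    unfold Matrix.IsHermitian
    rw [this, hSM]
    show (1 + Aᵀ * A)ᵀ = _
    rw [Matrix.transpose_add, Matrix.transpose_one, Matrix.transpose_mul,
      Matrix.transpose_transpose]
  have hne : (spectrum ℝ S).Nonempty :=
    ⟨hSH.eigenvalues (Classical.arbitrary (Fin n)),
      hSH.eigenvalues_mem_spectrum_real _⟩
  have hbdd : BddAbove (spectrum ℝ S) := ⟨1 + c, fun μ hμ => (key μ hμ).2⟩
  have hbddb : BddBelow (spectrum ℝ S) := ⟨1, fun μ hμ => (key μ hμ).1⟩
  have hInf1 : 1 ≤ sInf (spectrum ℝ S) := le_csInf hne fun μ hμ => (key μ hμ).1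
  have hSup : sSup (spectrum ℝ S) ≤ 1 + c := csSup_le hne fun μ hμ => (key μ hμ).2
  have hInfpos : 0 < sInf (spectrum ℝ S) := lt_of_lt_of_le one_pos hInf1
  unfold condNum
  rw [div_le_iff₀ hInfpos]
  calc sSup (spectrum ℝ S) ≤ 1 + c := hSup
    _ = (1 + c) * 1 := (mul_one _).symm
    _ ≤ (1 + c) * sInf (spectrum ℝ S) :=
        mul_le_mul_of_nonneg_left hInf1 (by linarith)
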